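/- In a ring with invertible element K and scalars satisfying the hypotheses, the identities (q^h; 0)_q := (q^h - 1)/(q - 1) satisfy: (q^h; n)_q = qⁿ(q^h; 0)_q + (qⁿ - 1)/(q - 1), and (K^l - K^{-l})/(q_i² - 1) = ((q-1)/(q_i²-1)) · (1 + K^{-l}) · (K^l - 1)/(q - 1). Consequently, both (q^h; n)_q and (K_i^l - K_i^{-l})/(q_i² - 1) lie in the A₁-subalgebra generated by q^h, q^{-h}, and (q^h; 0)_q over A₁ = ℚ[q]_{(q-1)}. -/
import Mathlib


noncomputable section

/-- `q`, as an element of `ℚ(q)`. -/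
def q1 : RatFunc ℚ := RatFunc.X

/-- `A₁ = ℚ[q]_{(q-1)}`, realized as the set of rational functions `g/h` with `h(1) ≠ 0`. -/
def A1set : Set (RatFunc ℚ) :=
  {f | ∃ g h : Polynomial ℚ, h.eval 1 ≠ 0 ∧
    f * algebraMap (Polynomial ℚ) (RatFunc ℚ) h = algebraMap (Polynomial ℚ) (RatFunc ℚ) g}

lemma q1_eq : q1 = algebraMap (Polynomial ℚ) (RatFunc ℚ) Polynomial.X := by
  rw [q1, RatFunc.algebraMap_X]

lemma q1_sub_one_ne : q1 - 1 ≠ 0 := by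
  rw [q1_eq, ← map_one (algebraMap (Polynomial ℚ) (RatFunc ℚ)), ← map_sub]
  exact RatFunc.algebraMap_ne_zero (Polynomial.X_sub_C_ne_zero 1)

lemma q1_pow_sub_one_ne (m : ℕ) (hm : 0 < m) : q1 ^ m - 1 ≠ 0 := by
  rw [q1_eq, ← map_pow, ← map_one (algebraMap (Polynomial ℚ) (RatFunc ℚ)), ← map_sub]
  refine RatFunc.algebraMap_ne_zero ?_
  intro h
  have := congrArg (Polynomial.coeff · m) h
  simp [Polynomial.coeff_one, hm.ne'] at this

lemma q1_pow_ne (m : ℕ) : q1 ^ m ≠ 0 := by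
  rw [q1_eq, ← map_pow]
  exact RatFunc.algebraMap_ne_zero (pow_ne_zero m Polynomial.X_ne_zero)


lemma geom_nat (m : ℕ) : (q1 ^ m - 1) * (q1 - 1)⁻¹ =
    algebraMap (Polynomial ℚ) (RatFunc ℚ) (∑ i ∈ Finset.range m, Polynomial.X ^ i) := by
  rw [map_sum]
  simp only [map_pow, ← q1_eq]
  rw [← geom_sum_mul q1 m, mul_assoc, mul_inv_cancel₀ q1_sub_one_ne, mul_one]

lemma mem_poly (p : Polynomial ℚ) : algebraMap (Polynomial ℚ) (RatFunc ℚ) p ∈ A1set :=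
  ⟨p, 1, by simp, by simp⟩

lemma mem_q1_zpow (n : ℤ) : q1 ^ n ∈ A1set := by
  obtain ⟨m, rfl | rfl⟩ := Int.eq_nat_or_neg n
  · rw [zpow_natCast, q1_eq, ← map_pow]
    exact mem_poly _
  · refine ⟨1, Polynomial.X ^ m, by simp, ?_⟩
    rw [map_pow, ← q1_eq, zpow_neg, zpow_natCast, inv_mul_cancel₀ (q1_pow_ne m), map_one]

lemma mem_gauss (n : ℤ) : (q1 ^ n - 1) * (q1 - 1)⁻¹ ∈ A1set := by
  obtain ⟨m, rfl | rfl⟩ := Int.eq_nat_or_neg n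
  · rw [zpow_natCast, geom_nat]; exact mem_poly _
  · refine ⟨-(∑ i ∈ Finset.range m, Polynomial.X ^ i), Polynomial.X ^ m, by simp, ?_⟩
    have hx : (algebraMap (Polynomial ℚ) (RatFunc ℚ) (Polynomial.X ^ m)) = q1 ^ m := by
      rw [map_pow, q1_eq]
    rw [hx, map_neg, ← geom_nat]
    have key : (q1 ^ (-(m : ℤ)) - 1) * q1 ^ m = 1 - q1 ^ m := by
      rw [zpow_neg, zpow_natCast, sub_mul, inv_mul_cancel₀ (q1_pow_ne m), one_mul]
    rw [mul_right_comm, key]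
    ring

lemma mem_frac (m : ℕ) (hm : 0 < m) : (q1 - 1) * (q1 ^ m - 1)⁻¹ ∈ A1set := by
  refine ⟨1, ∑ i ∈ Finset.range m, Polynomial.X ^ i, by simpa using hm.ne', ?_⟩
  rw [← geom_nat, map_one]
  have h2 := q1_pow_sub_one_ne m hm
  have h1 := q1_sub_one_ne
  field_simp

section
variable {R : Type*} [CommRing R] [Algebra (RatFunc ℚ) R] (u : Rˣ)

def Sgen (u : Rˣ) : Set R :=
  (algebraMap (RatFunc ℚ) R '' A1set) ∪
    {(u : R), ((u⁻¹ : Rˣ) : R), ((u : R) - 1) * algebraMap (RatFunc ℚ) R ((q1 - 1)⁻¹)}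

lemma genU : (u : R) ∈ Sgen u := Or.inr (Set.mem_insert _ _)

lemma genUinv : ((u⁻¹ : Rˣ) : R) ∈ Sgen u :=
  Or.inr (Set.mem_insert_of_mem _ (Set.mem_insert _ _))

lemma genD : ((u : R) - 1) * algebraMap (RatFunc ℚ) R ((q1 - 1)⁻¹) ∈ Sgen u :=
  Or.inr (Set.mem_insert_of_mem _ (Set.mem_insert_of_mem _ rfl))

lemma memA {f : RatFunc ℚ} (hf : f ∈ A1set) :
    algebraMap (RatFunc ℚ) R f ∈ Subring.closure (Sgen u) :=
  Subring.subset_closure (Or.inl ⟨f, hf, rfl⟩)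

lemma memU (m : ℤ) : ((u ^ m : Rˣ) : R) ∈ Subring.closure (Sgen u) := by
  obtain ⟨k, rfl | rfl⟩ := Int.eq_nat_or_neg m
  · rw [zpow_natCast, Units.val_pow_eq_pow_val]
    exact pow_mem (Subring.subset_closure (genU u)) k
  · rw [zpow_neg, zpow_natCast, ← inv_pow, Units.val_pow_eq_pow_val]
    exact pow_mem (Subring.subset_closure (genUinv u)) k

lemma memDnat (k : ℕ) :
    (((u ^ k : Rˣ) : R) - 1) * algebraMap (RatFunc ℚ) R ((q1 - 1)⁻¹) ∈
      Subring.closure (Sgen u) := by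
  rw [Units.val_pow_eq_pow_val, ← geom_sum_mul ((u : R)) k, mul_assoc]
  exact mul_mem (sum_mem fun i _ => pow_mem (Subring.subset_closure (genU u)) i)
    (Subring.subset_closure (genD u))

lemma memD (m : ℤ) :
    (((u ^ m : Rˣ) : R) - 1) * algebraMap (RatFunc ℚ) R ((q1 - 1)⁻¹) ∈
      Subring.closure (Sgen u) := by
  obtain ⟨k, rfl | rfl⟩ := Int.eq_nat_or_neg m
  · rw [zpow_natCast]; exact memDnat u k
  · have huk : ((u ^ (-(k : ℤ)) : Rˣ) : R) * ((u ^ (k : ℤ) : Rˣ) : R) = 1 := by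
      rw [← Units.val_mul, ← zpow_add, neg_add_cancel, zpow_zero, Units.val_one]
    have key : (((u ^ (-(k : ℤ)) : Rˣ) : R) - 1) * algebraMap (RatFunc ℚ) R ((q1 - 1)⁻¹) =
        -(((u ^ (-(k : ℤ)) : Rˣ) : R) *
          ((((u ^ (k : ℤ) : Rˣ) : R) - 1) * algebraMap (RatFunc ℚ) R ((q1 - 1)⁻¹))) := by
      linear_combination (algebraMap (RatFunc ℚ) R ((q1 - 1)⁻¹)) * huk
    rw [key]
    refine neg_mem (mul_mem (memU u _) ?_)
    rw [zpow_natCast]; exact memDnat u k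

end

/-- In a commutative `ℚ(q)`-algebra with an invertible element `u = q^h`, setting
`(q^h; n)_q = (q^h qⁿ - 1)/(q - 1)`, one has
`(q^h; n)_q = qⁿ (q^h; 0)_q + (qⁿ - 1)/(q - 1)` and, with `K_i = q_i^{h_i} = u^{r_i}`,
`(K_i^l - K_i^{-l})/(q_i² - 1) = ((q-1)/(q_i²-1)) (1 + K_i^{-l}) (K_i^l - 1)/(q-1)`.
Consequently both `(q^h; n)_q` and `(K_i^l - K_i^{-l})/(q_i² - 1)` lie in the
`A₁`-subalgebra generated by the `q^h`, `q^{-h}` and `(q^h; 0)_q`. -/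
theorem A1_form_identities (R : Type*) [CommRing R] [Algebra (RatFunc ℚ) R]
    (u Ki : Rˣ) (r : ℕ) (hr : 0 < r) (hKi : Ki = u ^ r) (n l : ℤ) :
    (((u : R) * algebraMap (RatFunc ℚ) R (q1 ^ n) - 1) * algebraMap (RatFunc ℚ) R ((q1 - 1)⁻¹) =
      algebraMap (RatFunc ℚ) R (q1 ^ n) *
          (((u : R) - 1) * algebraMap (RatFunc ℚ) R ((q1 - 1)⁻¹)) +
        algebraMap (RatFunc ℚ) R ((q1 ^ n - 1) * (q1 - 1)⁻¹)) ∧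
    ((((Ki ^ l : Rˣ) : R) - ((Ki ^ (-l) : Rˣ) : R)) *
        algebraMap (RatFunc ℚ) R ((q1 ^ (2 * (r : ℤ)) - 1)⁻¹) =
      algebraMap (RatFunc ℚ) R ((q1 - 1) * (q1 ^ (2 * (r : ℤ)) - 1)⁻¹) *
        (1 + ((Ki ^ (-l) : Rˣ) : R)) *
        ((((Ki ^ l : Rˣ) : R) - 1) * algebraMap (RatFunc ℚ) R ((q1 - 1)⁻¹))) ∧
    (((u : R) * algebraMap (RatFunc ℚ) R (q1 ^ n) - 1) * algebraMap (RatFunc ℚ) R ((q1 - 1)⁻¹) ∈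
      Subring.closure ((algebraMap (RatFunc ℚ) R '' A1set) ∪
        {(u : R), ((u⁻¹ : Rˣ) : R),
          ((u : R) - 1) * algebraMap (RatFunc ℚ) R ((q1 - 1)⁻¹)})) ∧
    ((((Ki ^ l : Rˣ) : R) - ((Ki ^ (-l) : Rˣ) : R)) *
        algebraMap (RatFunc ℚ) R ((q1 ^ (2 * (r : ℤ)) - 1)⁻¹) ∈
      Subring.closure ((algebraMap (RatFunc ℚ) R '' A1set) ∪
        {(u : R), ((u⁻¹ : Rˣ) : R),
          ((u : R) - 1) * algebraMap (RatFunc ℚ) R ((q1 - 1)⁻¹)})) := by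
  set A := algebraMap (RatFunc ℚ) R with hA
  have p1 : ((u : R) * A (q1 ^ n) - 1) * A ((q1 - 1)⁻¹) =
      A (q1 ^ n) * (((u : R) - 1) * A ((q1 - 1)⁻¹)) + A ((q1 ^ n - 1) * (q1 - 1)⁻¹) := by
    rw [map_mul, map_sub, map_one]; ring
  have hKl : (Ki ^ l : Rˣ) = u ^ ((r : ℤ) * l) := by
    rw [hKi, ← zpow_natCast u r, ← zpow_mul]
  have hKnl : (Ki ^ (-l) : Rˣ) = u ^ (-((r : ℤ) * l)) := by
    rw [hKi, ← zpow_natCast u r, ← zpow_mul, mul_neg]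
  have hK : ((Ki ^ l : Rˣ) : R) * ((Ki ^ (-l) : Rˣ) : R) = 1 := by
    rw [← Units.val_mul, ← zpow_add, add_neg_cancel, zpow_zero, Units.val_one]
  have h1 : A (q1 - 1) * A ((q1 - 1)⁻¹) = 1 := by
    rw [← map_mul, mul_inv_cancel₀ q1_sub_one_ne, map_one]
  have p2 : (((Ki ^ l : Rˣ) : R) - ((Ki ^ (-l) : Rˣ) : R)) * A ((q1 ^ (2 * (r : ℤ)) - 1)⁻¹) =
      A ((q1 - 1) * (q1 ^ (2 * (r : ℤ)) - 1)⁻¹) * (1 + ((Ki ^ (-l) : Rˣ) : R)) *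
        ((((Ki ^ l : Rˣ) : R) - 1) * A ((q1 - 1)⁻¹)) := by
    rw [map_mul]
    linear_combination (-(A ((q1 ^ (2 * (r : ℤ)) - 1)⁻¹)) * (1 + ((Ki ^ (-l) : Rˣ) : R)) *
        (((Ki ^ l : Rˣ) : R) - 1)) * h1 + (-(A ((q1 ^ (2 * (r : ℤ)) - 1)⁻¹))) * hK
  refine ⟨p1, p2, ?_, ?_⟩
  · rw [p1]
    exact add_mem (mul_mem (memA u (mem_q1_zpow n)) (Subring.subset_closure (genD u)))
      (memA u (mem_gauss n))
  · rw [p2]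
    have hq2r : q1 ^ (2 * (r : ℤ)) = q1 ^ (2 * r : ℕ) := by
      rw [show (2 * (r : ℤ)) = ((2 * r : ℕ) : ℤ) by push_cast; ring, zpow_natCast]
    rw [hq2r, hKl, hKnl]
    exact mul_mem (mul_mem (memA u (mem_frac (2 * r) (by positivity)))
      (add_mem (one_mem _) (memU u _))) (memD u _)

end
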